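/- Let d₁, d₂, m, m′ ≥ 1. Let (b_k)_{1≤k≤d₁} be an orthonormal basis of ℂ^{d₁} and (b′_l)_{1≤l≤d₂} an orthonormal basis of ℂ^{d₂}. Let ε₀ ∈ ℂ^m be a unit vector, (ε_k)_{1≤k≤d₁} an orthonormal family in ℂ^m, and V a unitary on ℂ^m ⊗ ℂ^{d₁} with V(ε₀ ⊗ b_k) = ε_k ⊗ b_k for all k; similarly let ε′₀ ∈ ℂ^{m′} be a unit vector, (ε′_l) an orthonormal family in ℂ^{m′}, and V′ a unitary on ℂ^{d₂} ⊗ ℂ^{m′} with V′(b′_l ⊗ ε′₀) = b′_l ⊗ ε′_l for all l. Let ψ = Σ_{k,l} γ_{kl} · b_k ⊗ b′_l ∈ ℂ^{d₁} ⊗ ℂ^{d₂} be a unit vector, and let Φ = (V ⊗ I)(I ⊗ V′)(ε₀ ⊗ ψ ⊗ ε′₀) ∈ ℂ^m ⊗ ℂ^{d₁} ⊗ ℂ^{d₂} ⊗ ℂ^{m′} (with the operators acting on the indicated adjacent factors). Then the reduced density matrix of the pair, obtained by partial-tracing Φ Φ* over the two environment factors ℂ^m and ℂ^{m′}, equals Σ_{k,l}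 |γ_{kl}|² · (b_k ⊗ b′_l)(b_k ⊗ b′_l)*. In particular it is diagonal in the product basis (b_k ⊗ b′_l) and hence separable: after each member of an entangled pair is recorded by its own environment in a conserved basis, every possible history of the pair is a pure tensor product, so no violation of Bell's inequalities can occur. -/

import Mathlib

open Matrix BigOperators

/-- Partial trace of an operator on `ℂ^m ⊗ ℂ^{d₁} ⊗ ℂ^{d₂} ⊗ ℂ^{m′}` over the two
environment factors `ℂ^m` and `ℂ^{m′}`, yielding the reduced operator of the pair on
`ℂ^{d₁} ⊗ ℂ^{d₂}`. -/
noncomputable def trEnvPair {m d₁ d₂ m' : ℕ}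
    (A : Matrix (Fin m × Fin d₁ × Fin d₂ × Fin m') (Fin m × Fin d₁ × Fin d₂ × Fin m') ℂ) :
    Matrix (Fin d₁ × Fin d₂) (Fin d₁ × Fin d₂) ℂ :=
  fun u v => ∑ a : Fin m, ∑ c : Fin m', A (a, u.1, u.2, c) (a, v.1, v.2, c)

/-- After each member of an entangled pair `ψ = Σ γ_{kl} b_k ⊗ b′_l` is recorded by its
own environment in a conserved basis (via the unitaries `V` and `V′`), the reduced density
matrix of the pair is `Σ_{k,l} |γ_{kl}|² (b_k ⊗ b′_l)(b_k ⊗ b′_l)*` : it is diagonal in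
the product basis, hence separable, so no violation of Bell's inequalities can occur. -/
theorem entangled_pair_recorded_is_separable (m d₁ d₂ m' : ℕ)
    (hm : 1 ≤ m) (hd₁ : 1 ≤ d₁) (hd₂ : 1 ≤ d₂) (hm' : 1 ≤ m')
    -- orthonormal bases of the two systems
    (b : Fin d₁ → Fin d₁ → ℂ)
    (hb : ∀ k k', star (b k) ⬝ᵥ b k' = if k = k' then (1 : ℂ) else 0)
    (b' : Fin d₂ → Fin d₂ → ℂ)
    (hb' : ∀ l l', star (b' l) ⬝ᵥ b' l' = if l = l' then (1 : ℂ) else 0)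
    -- first environment and its recording unitary, acting on ℂ^m ⊗ ℂ^{d₁}
    (ε₀ : Fin m → ℂ) (hε₀ : star ε₀ ⬝ᵥ ε₀ = 1)
    (ε : Fin d₁ → Fin m → ℂ)
    (hε : ∀ k k', star (ε k) ⬝ᵥ ε k' = if k = k' then (1 : ℂ) else 0)
    (V : Matrix (Fin m × Fin d₁) (Fin m × Fin d₁) ℂ)
    (hV : V ∈ Matrix.unitaryGroup (Fin m × Fin d₁) ℂ)
    (hVrec : ∀ k, V *ᵥ (fun p : Fin m × Fin d₁ => ε₀ p.1 * b k p.2)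
      = fun p : Fin m × Fin d₁ => ε k p.1 * b k p.2)
    -- second environment and its recording unitary, acting on ℂ^{d₂} ⊗ ℂ^{m′}
    (ε₀' : Fin m' → ℂ) (hε₀' : star ε₀' ⬝ᵥ ε₀' = 1)
    (ε' : Fin d₂ → Fin m' → ℂ)
    (hε' : ∀ l l', star (ε' l) ⬝ᵥ ε' l' = if l = l' then (1 : ℂ) else 0)
    (V' : Matrix (Fin d₂ × Fin m') (Fin d₂ × Fin m') ℂ)
    (hV' : V' ∈ Matrix.unitaryGroup (Fin d₂ × Fin m') ℂ)
    (hV'rec : ∀ l, V' *ᵥ (fun q : Fin d₂ × Fin m' => b' l q.1 * ε₀' q.2)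
      = fun q : Fin d₂ × Fin m' => b' l q.1 * ε' l q.2)
    -- the entangled pair state ψ = Σ γ_{kl} b_k ⊗ b′_l, a unit vector
    (γ : Fin d₁ → Fin d₂ → ℂ) (hγ : (∑ k, ∑ l, ‖γ k l‖ ^ 2) = 1)
    -- the initial total state ε₀ ⊗ ψ ⊗ ε₀′
    (ξ : Fin m × Fin d₁ × Fin d₂ × Fin m' → ℂ)
    (hξ : ξ = fun p => ε₀ p.1 * (∑ k, ∑ l, γ k l * b k p.2.1 * b' l p.2.2.1) * ε₀' p.2.2.2)
    -- V ⊗ I acting on the factors ℂ^m ⊗ ℂ^{d₁}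
    (Vbig : Matrix (Fin m × Fin d₁ × Fin d₂ × Fin m') (Fin m × Fin d₁ × Fin d₂ × Fin m') ℂ)
    (hVbig : Vbig = fun p q => V (p.1, p.2.1) (q.1, q.2.1) *
      (if p.2.2 = q.2.2 then (1 : ℂ) else 0))
    -- I ⊗ V′ acting on the factors ℂ^{d₂} ⊗ ℂ^{m′}
    (V'big : Matrix (Fin m × Fin d₁ × Fin d₂ × Fin m') (Fin m × Fin d₁ × Fin d₂ × Fin m') ℂ)
    (hV'big : V'big = fun p q => (if p.1 = q.1 then (1 : ℂ) else 0) *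
      (if p.2.1 = q.2.1 then (1 : ℂ) else 0) *
      V' (p.2.2.1, p.2.2.2) (q.2.2.1, q.2.2.2))
    -- the final total state Φ = (V ⊗ I)(I ⊗ V′)(ε₀ ⊗ ψ ⊗ ε₀′)
    (Φ : Fin m × Fin d₁ × Fin d₂ × Fin m' → ℂ) (hΦ : Φ = Vbig *ᵥ (V'big *ᵥ ξ)) :
    trEnvPair (Matrix.vecMulVec Φ (star Φ))
      = ∑ k, ∑ l, ((‖γ k l‖ : ℂ) ^ 2) •
          Matrix.vecMulVec (fun u : Fin d₁ × Fin d₂ => b k u.1 * b' l u.2)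
            (star (fun u : Fin d₁ × Fin d₂ => b k u.1 * b' l u.2)) := by
  classical
  have hεδ : ∀ k k', (∑ a, ε k a * (starRingEnd ℂ) (ε k' a)) = if k' = k then (1:ℂ) else 0 := by
    intro k k'
    simpa [dotProduct, mul_comm] using hε k' k
  have hε'δ : ∀ l l', (∑ c, ε' l c * (starRingEnd ℂ) (ε' l' c)) = if l' = l then (1:ℂ) else 0 := by
    intro l l'
    simpa [dotProduct, mul_comm] using hε' l' l
  -- explicit formula for V'big *ᵥ ξ
  have hχ : V'big *ᵥ ξ = fun p => ∑ k, ∑ l,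
      γ k l * (ε₀ p.1 * b k p.2.1 * (b' l p.2.2.1 * ε' l p.2.2.2)) := by
    funext p
    have key : ∀ l, (∑ q : Fin d₂ × Fin m', V' (p.2.2.1, p.2.2.2) q * (b' l q.1 * ε₀' q.2))
        = b' l p.2.2.1 * ε' l p.2.2.2 := by
      intro l
      simpa [Matrix.mulVec, dotProduct] using congrFun (hV'rec l) (p.2.2.1, p.2.2.2)
    have hcol : (V'big *ᵥ ξ) p
        = ∑ q : Fin d₂ × Fin m', V' (p.2.2.1, p.2.2.2) q * ξ (p.1, p.2.1, q.1, q.2) := by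
      conv_rhs => rw [Fintype.sum_prod_type]
      rw [hV'big]
      simp [Matrix.mulVec, dotProduct, Fintype.sum_prod_type, ite_mul, zero_mul]
    rw [hcol]
    calc (∑ q : Fin d₂ × Fin m', V' (p.2.2.1, p.2.2.2) q * ξ (p.1, p.2.1, q.1, q.2))
        = ∑ q : Fin d₂ × Fin m', ∑ k, ∑ l,
            γ k l * (ε₀ p.1 * b k p.2.1) *
              (V' (p.2.2.1, p.2.2.2) q * (b' l q.1 * ε₀' q.2)) := by
          refine Finset.sum_congr rfl fun q _ => ?_
          rw [hξ]
          simp only [Finset.mul_sum, Finset.sum_mul]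
          refine Finset.sum_congr rfl fun k _ => Finset.sum_congr rfl fun l _ => ?_
          ring
      _ = ∑ k, ∑ l, ∑ q : Fin d₂ × Fin m',
            γ k l * (ε₀ p.1 * b k p.2.1) *
              (V' (p.2.2.1, p.2.2.2) q * (b' l q.1 * ε₀' q.2)) := by
          rw [Finset.sum_comm]
          exact Finset.sum_congr rfl fun k _ => Finset.sum_comm
      _ = ∑ k, ∑ l, γ k l * (ε₀ p.1 * b k p.2.1 * (b' l p.2.2.1 * ε' l p.2.2.2)) := by
          refine Finset.sum_congr rfl fun k _ => Finset.sum_congr rfl fun l _ => ?_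
          rw [← Finset.mul_sum, key l]
          ring
  -- explicit formula for Φ
  have hΦ' : Φ = fun p => ∑ k, ∑ l,
      γ k l * (ε k p.1 * b k p.2.1 * (b' l p.2.2.1 * ε' l p.2.2.2)) := by
    rw [hΦ, hχ]
    funext p
    have key : ∀ k, (∑ q : Fin m × Fin d₁, V (p.1, p.2.1) q * (ε₀ q.1 * b k q.2))
        = ε k p.1 * b k p.2.1 := by
      intro k
      simpa [Matrix.mulVec, dotProduct] using congrFun (hVrec k) (p.1, p.2.1)
    have hcol : (Vbig *ᵥ fun p => ∑ k, ∑ l,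
          γ k l * (ε₀ p.1 * b k p.2.1 * (b' l p.2.2.1 * ε' l p.2.2.2))) p
        = ∑ q : Fin m × Fin d₁, V (p.1, p.2.1) q *
            ∑ k, ∑ l, γ k l * (ε₀ q.1 * b k q.2 * (b' l p.2.2.1 * ε' l p.2.2.2)) := by
      conv_rhs => rw [Fintype.sum_prod_type]
      rw [hVbig]
      simp [Matrix.mulVec, dotProduct, Fintype.sum_prod_type, Prod.ext_iff, ite_and,
        mul_ite, mul_zero, mul_one, ite_mul, zero_mul]
    rw [hcol]
    calc (∑ q : Fin m × Fin d₁, V (p.1, p.2.1) q *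
            ∑ k, ∑ l, γ k l * (ε₀ q.1 * b k q.2 * (b' l p.2.2.1 * ε' l p.2.2.2)))
        = ∑ q : Fin m × Fin d₁, ∑ k, ∑ l,
            γ k l * (b' l p.2.2.1 * ε' l p.2.2.2) *
              (V (p.1, p.2.1) q * (ε₀ q.1 * b k q.2)) := by
          refine Finset.sum_congr rfl fun q _ => ?_
          simp only [Finset.mul_sum]
          refine Finset.sum_congr rfl fun k _ => Finset.sum_congr rfl fun l _ => ?_
          ring
      _ = ∑ k, ∑ l, ∑ q : Fin m × Fin d₁,
            γ k l * (b' l p.2.2.1 * ε' l p.2.2.2) *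
              (V (p.1, p.2.1) q * (ε₀ q.1 * b k q.2)) := by
          rw [Finset.sum_comm]
          exact Finset.sum_congr rfl fun k _ => Finset.sum_comm
      _ = ∑ k, ∑ l, γ k l * (ε k p.1 * b k p.2.1 * (b' l p.2.2.1 * ε' l p.2.2.2)) := by
          refine Finset.sum_congr rfl fun k _ => Finset.sum_congr rfl fun l _ => ?_
          rw [← Finset.mul_sum, key k]
          ring
  -- now compute the partial trace entrywise
  ext u v
  have rhs_eq : (∑ k, ∑ l, ((‖γ k l‖ : ℂ) ^ 2) •
          Matrix.vecMulVec (fun u : Fin d₁ × Fin d₂ => b k u.1 * b' l u.2)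
            (star (fun u : Fin d₁ × Fin d₂ => b k u.1 * b' l u.2))) u v
      = ∑ k, ∑ l, γ k l * (starRingEnd ℂ) (γ k l) *
          (b k u.1 * b' l u.2) * (starRingEnd ℂ) (b k v.1 * b' l v.2) := by
    simp only [Matrix.sum_apply, Matrix.smul_apply, Matrix.vecMulVec_apply, Pi.star_apply,
      Complex.star_def, smul_eq_mul]
    refine Finset.sum_congr rfl fun k _ => Finset.sum_congr rfl fun l _ => ?_
    have habs : ((‖γ k l‖ : ℂ)) ^ 2 = γ k l * (starRingEnd ℂ) (γ k l) := by
      rw [Complex.mul_conj]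
      norm_cast
      exact Complex.sq_norm _
    rw [habs]
    ring
  rw [rhs_eq]
  calc trEnvPair (Matrix.vecMulVec Φ (star Φ)) u v
      = ∑ e : Fin m × Fin m', Φ (e.1, u.1, u.2, e.2) *
          (starRingEnd ℂ) (Φ (e.1, v.1, v.2, e.2)) := by
        rw [Fintype.sum_prod_type]
        rfl
    _ = ∑ e : Fin m × Fin m', ∑ k', ∑ l', ∑ k, ∑ l,
          (γ k l * (ε k e.1 * b k u.1 * (b' l u.2 * ε' l e.2))) *
          (starRingEnd ℂ) (γ k' l' * (ε k' e.1 * b k' v.1 * (b' l' v.2 * ε' l' e.2))) := by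
        refine Finset.sum_congr rfl fun e _ => ?_
        rw [hΦ']
        simp only [map_sum, Finset.sum_mul, Finset.mul_sum]
    _ = ∑ k', ∑ l', ∑ k, ∑ l, ∑ e : Fin m × Fin m',
          (γ k l * (ε k e.1 * b k u.1 * (b' l u.2 * ε' l e.2))) *
          (starRingEnd ℂ) (γ k' l' * (ε k' e.1 * b k' v.1 * (b' l' v.2 * ε' l' e.2))) := by
        rw [Finset.sum_comm]
        refine Finset.sum_congr rfl fun k' _ => ?_
        rw [Finset.sum_comm]
        refine Finset.sum_congr rfl fun l' _ => ?_
        rw [Finset.sum_comm]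
        refine Finset.sum_congr rfl fun k _ => ?_
        exact Finset.sum_comm
    _ = ∑ k', ∑ l', ∑ k, ∑ l,
          γ k l * (starRingEnd ℂ) (γ k' l') *
            (b k u.1 * b' l u.2) * (starRingEnd ℂ) (b k' v.1 * b' l' v.2) *
            ((∑ a, ε k a * (starRingEnd ℂ) (ε k' a)) *
             (∑ c, ε' l c * (starRingEnd ℂ) (ε' l' c))) := by
        refine Finset.sum_congr rfl fun k' _ => Finset.sum_congr rfl fun l' _ =>
          Finset.sum_congr rfl fun k _ => Finset.sum_congr rfl fun l _ => ?_
        conv_rhs => rw [Finset.sum_mul_sum]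
        simp only [Finset.mul_sum]
        rw [Fintype.sum_prod_type]
        refine Finset.sum_congr rfl fun a _ => Finset.sum_congr rfl fun c _ => ?_
        simp only [_root_.map_mul]
        ring
    _ = ∑ k, ∑ l, γ k l * (starRingEnd ℂ) (γ k l) *
          (b k u.1 * b' l u.2) * (starRingEnd ℂ) (b k v.1 * b' l v.2) := by
        refine Finset.sum_congr rfl fun k' _ => Finset.sum_congr rfl fun l' _ => ?_
        simp only [hεδ, hε'δ]
        simp [mul_ite, mul_zero, mul_one, ite_mul, zero_mul, Finset.sum_ite_eq,
          Finset.sum_ite_eq']
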